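/- If h : V → ℝ is harmonic on a connected open set V ⊆ ℂ containing the segment [0,1], bounded by 1 in absolute value on V, and h(1) = 0, then there exists a constant a with 0 ≤ a < 1, depending only on V (not on h), such that |h(0)| ≤ a. -/

import Mathlib

open Complex Metric MeasureTheory Real Set intervalIntegral

/-- A real-valued function on an open subset of `ℂ` is harmonic if it is `C²` there and
its Laplacian `∂²h/∂x² + ∂²h/∂y²` vanishes. -/
def HarmonicOnSet (h : ℂ → ℝ) (V : Set ℂ) : Prop :=
  ContDiffOn ℝ 2 h V ∧ ∀ z ∈ V,
    fderiv ℝ (fun w => fderiv ℝ h w 1) z 1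
      + fderiv ℝ (fun w => fderiv ℝ h w Complex.I) z Complex.I = 0

noncomputable def hDeriv (h : ℂ → ℝ) (z : ℂ) : ℂ :=
  (fderiv ℝ h z 1 : ℝ) • (1 : ℂ) - (fderiv ℝ h z Complex.I : ℝ) • (Complex.I : ℂ)

lemma hDeriv_differentiableAt {h : ℂ → ℝ} {V : Set ℂ} (hV : IsOpen V)
    (hh : HarmonicOnSet h V) {z : ℂ} (hz : z ∈ V) :
    DifferentiableAt ℂ (hDeriv h) z := by
  have hC2 : ContDiffAt ℝ 2 h z := (hh.1 z hz).contDiffAt (hV.mem_nhds hz)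
  have hF : ContDiffAt ℝ 1 (fderiv ℝ h) z := hC2.fderiv_right (by norm_num)
  have hFd : DifferentiableAt ℝ (fderiv ℝ h) z := hF.differentiableAt (by norm_num)
  set f'' := fderiv ℝ (fderiv ℝ h) z with hf''
  have hsymm : ∀ v w, f'' v w = f'' w v := hC2.isSymmSndFDerivAt (by simp [minSmoothness_of_isRCLikeNormedField])
  -- partial derivatives
  have Hx : HasFDerivAt (fun w => fderiv ℝ h w 1) (f''.flip 1) z := by
    have := hFd.hasFDerivAt.clm_apply (hasFDerivAt_const (1:ℂ) z)
    simpa using this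
  have Hy : HasFDerivAt (fun w => fderiv ℝ h w Complex.I) (f''.flip Complex.I) z := by
    have := hFd.hasFDerivAt.clm_apply (hasFDerivAt_const (Complex.I:ℂ) z)
    simpa using this
  have hlap : f'' 1 1 + f'' Complex.I Complex.I = 0 := by
    have h2 := hh.2 z hz
    rwa [Hx.fderiv, Hy.fderiv] at h2
  -- real derivative of hDeriv
  have HL : HasFDerivAt (hDeriv h)
      ((f''.flip 1).smulRight (1:ℂ) - (f''.flip Complex.I).smulRight (Complex.I:ℂ)) z :=
    (Hx.smul_const (1:ℂ)).sub (Hy.smul_const (Complex.I:ℂ))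
  -- complex linear derivative
  set a : ℂ := (f'' 1 1 : ℝ) • (1:ℂ) - (f'' 1 Complex.I : ℝ) • (Complex.I : ℂ) with ha
  have key : (a • ContinuousLinearMap.id ℂ ℂ).restrictScalars ℝ
      = (f''.flip 1).smulRight (1:ℂ) - (f''.flip Complex.I).smulRight (Complex.I:ℂ) := by
    apply ContinuousLinearMap.ext
    intro w
    have hw : w = (w.re : ℝ) • (1:ℂ) + (w.im : ℝ) • (Complex.I : ℂ) := by
      simp [Complex.real_smul, Complex.re_add_im]
    have e1 : f'' w 1 = w.re * f'' 1 1 + w.im * f'' Complex.I 1 := by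
      conv_lhs => rw [hw]
      rw [f''.map_add, f''.map_smul, f''.map_smul]
      simp [smul_eq_mul]
    have e2 : f'' w Complex.I = w.re * f'' 1 Complex.I + w.im * f'' Complex.I Complex.I := by
      conv_lhs => rw [hw]
      rw [f''.map_add, f''.map_smul, f''.map_smul]
      simp [smul_eq_mul]
    have e3 : f'' Complex.I 1 = f'' 1 Complex.I := hsymm _ _
    have e4 : f'' Complex.I Complex.I = -f'' 1 1 := by linarith
    simp only [ContinuousLinearMap.coe_restrictScalars', ContinuousLinearMap.smul_apply,
      ContinuousLinearMap.id_apply, ContinuousLinearMap.sub_apply,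
      ContinuousLinearMap.smulRight_apply, ContinuousLinearMap.flip_apply]
    rw [e1, e2, e3, e4, ha]
    apply Complex.ext <;> simp <;> ring
  exact ⟨_, hasFDerivAt_of_restrictScalars ℝ HL key⟩

lemma re_hDeriv_mul (h : ℂ → ℝ) (p v : ℂ) :
    ((hDeriv h p) * v).re = fderiv ℝ h p v := by
  have hv : v = (v.re : ℝ) • (1:ℂ) + (v.im : ℝ) • (Complex.I : ℂ) := by
    simp [Complex.real_smul, Complex.re_add_im]
  conv_rhs => rw [hv]
  rw [(fderiv ℝ h p).map_add, (fderiv ℝ h p).map_smul, (fderiv ℝ h p).map_smul]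
  simp [hDeriv, smul_eq_mul]
  ring

lemma circle_mvp {h : ℂ → ℝ} {V : Set ℂ} (hV : IsOpen V) (hh : HarmonicOnSet h V)
    {c : ℂ} {R : ℝ} (hsub : closedBall c R ⊆ V) {r : ℝ} (hr0 : 0 ≤ r) (hrR : r < R) :
    ∫ θ in (0:ℝ)..(2*π), h (circleMap c r θ) = 2 * π * h c := by
  have hRpos : 0 < R := lt_of_le_of_lt hr0 hrR
  have hcont_h : ContinuousOn h V := hh.1.continuousOn
  have hfd_cont : ContinuousOn (fderiv ℝ h) V :=
    hh.1.continuousOn_fderiv_of_isOpen hV (by norm_num)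
  have hdiff : ∀ z ∈ V, DifferentiableAt ℝ h z := fun z hz =>
    ((hh.1 z hz).contDiffAt (hV.mem_nhds hz)).differentiableAt (by norm_num)
  -- membership of circle points
  have hmem : ∀ x : ℝ, |x| ≤ R → ∀ θ : ℝ, circleMap c x θ ∈ closedBall c R := by
    intro x hx θ
    have := circleMap_mem_sphere' c x θ
    exact closedBall_subset_closedBall (by simpa using hx) (sphere_subset_closedBall this)
  -- bound on the gradient
  obtain ⟨M, hM⟩ : ∃ M, ∀ z ∈ closedBall c R, ‖fderiv ℝ h z‖ ≤ M :=
    (isCompact_closedBall c R).exists_bound_of_continuousOn (hfd_cont.mono hsub)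
  set A : ℝ → ℝ := fun x => ∫ θ in (0:ℝ)..(2*π), h (circleMap c x θ) with hA
  -- the derivative of the circle average is zero
  have key : ∀ r₀ ∈ Ico (0:ℝ) R, HasDerivAt A 0 r₀ := by
    intro r₀ hr₀
    obtain ⟨hr₀0, hr₀R⟩ := hr₀
    set ε : ℝ := (R - r₀)/2 with hε
    have hεpos : 0 < ε := by simp [hε]; linarith
    have hball_mem : ∀ x ∈ ball r₀ ε, |x| ≤ R := by
      intro x hx
      rw [mem_ball, Real.dist_eq] at hx
      rw [abs_le]; constructor <;> [skip; skip] <;> cases' abs_lt.1 hx with h1 h2 <;> linarith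
    have hFcont : ∀ x : ℝ, |x| ≤ R → Continuous fun θ => h (circleMap c x θ) := by
      intro x hx
      exact (hcont_h.mono hsub).comp_continuous (continuous_circleMap c x) (hmem x hx)
    have hF'cont : ∀ x : ℝ, |x| ≤ R →
        Continuous fun θ : ℝ => fderiv ℝ h (circleMap c x θ) (Complex.exp (θ * Complex.I)) := by
      intro x hx
      apply Continuous.clm_apply
      · exact ((hfd_cont.mono hsub).comp_continuous (continuous_circleMap c x) (hmem x hx))
      · exact Continuous.cexp (by continuity)
    have hder := intervalIntegral.hasDerivAt_integral_of_dominated_loc_of_deriv_le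
      (F := fun x θ => h (circleMap c x θ))
      (F' := fun x θ => fderiv ℝ h (circleMap c x θ) (Complex.exp (θ * Complex.I)))
      (x₀ := r₀) (a := 0) (b := 2*π) (μ := volume) (bound := fun _ => M) (Metric.ball_mem_nhds r₀ hεpos)
      ?_ ?_ ?_ ?_ ?_ ?_
    · -- now show the derivative value is 0
      have hval : (∫ θ in (0:ℝ)..(2*π),
          fderiv ℝ h (circleMap c r₀ θ) (Complex.exp (θ * Complex.I))) = 0 := by
        rcases eq_or_lt_of_le hr₀0 with h0 | hpos
        · -- r₀ = 0
          have hL : ∀ θ : ℝ, fderiv ℝ h c (Complex.exp (θ * Complex.I))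
              = Real.cos θ * fderiv ℝ h c 1 + Real.sin θ * fderiv ℝ h c Complex.I := by
            intro θ
            have he : Complex.exp (θ * Complex.I)
                = (Real.cos θ : ℝ) • (1:ℂ) + (Real.sin θ : ℝ) • (Complex.I : ℂ) := by
              rw [Complex.exp_mul_I]
              simp [Complex.real_smul, Complex.ofReal_cos, Complex.ofReal_sin]
            rw [he, (fderiv ℝ h c).map_add, (fderiv ℝ h c).map_smul, (fderiv ℝ h c).map_smul]
            simp [smul_eq_mul]
          have hcm : ∀ θ : ℝ, circleMap c r₀ θ = c := by
            intro θ; rw [← h0]; simp [circleMap]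
          calc (∫ θ in (0:ℝ)..(2*π),
                fderiv ℝ h (circleMap c r₀ θ) (Complex.exp (θ * Complex.I)))
              = ∫ θ in (0:ℝ)..(2*π),
                (Real.cos θ * fderiv ℝ h c 1 + Real.sin θ * fderiv ℝ h c Complex.I) := by
                apply intervalIntegral.integral_congr
                intro θ _; simp only [hcm θ, hL θ]
            _ = (∫ θ in (0:ℝ)..(2*π), Real.cos θ) * fderiv ℝ h c 1
                + (∫ θ in (0:ℝ)..(2*π), Real.sin θ) * fderiv ℝ h c Complex.I := by
                rw [intervalIntegral.integral_add, intervalIntegral.integral_mul_const,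
                  intervalIntegral.integral_mul_const]
                · exact (Real.continuous_cos.mul continuous_const).intervalIntegrable _ _
                · exact (Real.continuous_sin.mul continuous_const).intervalIntegrable _ _
            _ = 0 := by
                simp [integral_cos, integral_sin, Real.sin_two_pi, Real.cos_two_pi]
        · -- use Cauchy's theorem
          have hgcontV : ContinuousOn (hDeriv h) V := fun z hz =>
            (hDeriv_differentiableAt hV hh hz).continuousAt.continuousWithinAt
          have habs : |r₀| ≤ R := by rw [_root_.abs_of_nonneg hr₀0]; exact hr₀R.le
          have hC := circleIntegral_eq_zero_of_differentiable_on_off_countable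
            (f := hDeriv h) (c := c) (R := r₀) hr₀0 countable_empty
            (hgcontV.mono ((closedBall_subset_closedBall hr₀R.le).trans hsub))
            (fun z hz => hDeriv_differentiableAt hV hh
              (hsub (ball_subset_closedBall.trans (closedBall_subset_closedBall hr₀R.le) hz.1)))
          rw [circleIntegral] at hC
          have h1 : ∀ θ : ℝ, deriv (circleMap c r₀) θ • hDeriv h (circleMap c r₀ θ)
              = ((r₀ : ℂ) * Complex.I) *
                (hDeriv h (circleMap c r₀ θ) * Complex.exp (θ * Complex.I)) := by
            intro θ
            rw [deriv_circleMap]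
            simp only [circleMap, smul_eq_mul, zero_add]
            ring
          rw [intervalIntegral.integral_congr (fun θ _ => h1 θ),
            intervalIntegral.integral_const_mul] at hC
          have hne : ((r₀ : ℂ) * Complex.I) ≠ 0 := by
            simp [Complex.ext_iff, hpos.ne']
          have hzero : (∫ θ in (0:ℝ)..(2*π),
              hDeriv h (circleMap c r₀ θ) * Complex.exp (θ * Complex.I)) = 0 :=
            (mul_eq_zero.mp hC).resolve_left hne
          have hfc : Continuous fun θ : ℝ =>
              hDeriv h (circleMap c r₀ θ) * Complex.exp (θ * Complex.I) := by
            apply Continuous.mul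
            · exact (hgcontV.mono hsub).comp_continuous (continuous_circleMap c r₀) (hmem r₀ habs)
            · exact Continuous.cexp (by continuity)
          calc (∫ θ in (0:ℝ)..(2*π),
                fderiv ℝ h (circleMap c r₀ θ) (Complex.exp (θ * Complex.I)))
              = ∫ θ in (0:ℝ)..(2*π), Complex.reCLM
                (hDeriv h (circleMap c r₀ θ) * Complex.exp (θ * Complex.I)) := by
                apply intervalIntegral.integral_congr
                intro θ _
                simp only [Complex.reCLM_apply]
                exact (re_hDeriv_mul h _ _).symm
            _ = Complex.reCLM (∫ θ in (0:ℝ)..(2*π),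
                hDeriv h (circleMap c r₀ θ) * Complex.exp (θ * Complex.I)) :=
                Complex.reCLM.intervalIntegral_comp_comm (hfc.intervalIntegrable _ _)
            _ = 0 := by rw [hzero]; simp
      rw [hval] at hder
      exact hder.2
    · filter_upwards [Metric.ball_mem_nhds r₀ hεpos] with x hx
      exact (hFcont x (hball_mem x hx)).aestronglyMeasurable
    · exact ((hFcont r₀ (by rw [_root_.abs_of_nonneg hr₀0]; exact hr₀R.le)).intervalIntegrable _ _)
    · exact ((hF'cont r₀ (by rw [_root_.abs_of_nonneg hr₀0]; exact hr₀R.le)).aestronglyMeasurable)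
    · filter_upwards with θ _
      intro x hx
      calc ‖fderiv ℝ h (circleMap c x θ) (Complex.exp (θ * Complex.I))‖
          ≤ ‖fderiv ℝ h (circleMap c x θ)‖ * ‖Complex.exp ((θ:ℂ) * Complex.I)‖ :=
            ContinuousLinearMap.le_opNorm _ _
        _ ≤ M := by
            rw [Complex.norm_exp_ofReal_mul_I, mul_one]
            exact hM _ (hmem x (hball_mem x hx) θ)
    · exact intervalIntegrable_const
    · filter_upwards with θ _
      intro x hx
      have hx' : circleMap c x θ ∈ V := hsub (hmem x (hball_mem x hx) θ)
      have h1 : HasDerivAt (fun y : ℝ => circleMap c y θ)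
          (Complex.exp (θ * Complex.I)) x := by
        have : (fun y : ℝ => circleMap c y θ)
            = fun y : ℝ => c + y • Complex.exp (θ * Complex.I) := by
          funext y; simp [circleMap, Complex.real_smul]
        rw [this]
        simpa using ((hasDerivAt_id x).smul_const (Complex.exp (θ * Complex.I))).const_add c
      exact ((hdiff _ hx').hasFDerivAt.comp_hasDerivAt x h1)
  -- conclude by constancy
  have hA0 : A 0 = 2 * π * h c := by
    have : ∀ θ : ℝ, circleMap c 0 θ = c := fun θ => by simp [circleMap]
    simp only [hA]
    rw [intervalIntegral.integral_congr (g := fun _ => h c) (fun θ _ => by rw [this θ])]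
    rw [intervalIntegral.integral_const]
    simp [mul_comm]
  rcases eq_or_lt_of_le hr0 with h0 | hpos
  · rw [← h0] at *
    exact hA0
  · have h1 : ContinuousOn A (Icc 0 r) := fun x hx =>
      ((key x ⟨hx.1, lt_of_le_of_lt hx.2 hrR⟩).continuousAt).continuousWithinAt
    have h2 : ∀ x ∈ Ico (0:ℝ) r, HasDerivWithinAt A 0 (Ici x) x := fun x hx =>
      ((key x ⟨hx.1, lt_trans hx.2 hrR⟩).hasDerivWithinAt)
    have := constant_of_has_deriv_right_zero h1 h2 r ⟨hr0, le_rfl⟩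
    calc (∫ θ in (0:ℝ)..(2*π), h (circleMap c r θ)) = A r := rfl
      _ = A 0 := this
      _ = 2 * π * h c := hA0

lemma ball_mvp {h : ℂ → ℝ} {V : Set ℂ} (hV : IsOpen V) (hh : HarmonicOnSet h V)
    {c : ℂ} {R : ℝ} (hR : 0 < R) (hsub : closedBall c R ⊆ V) :
    ∫ z in ball c R, h z = π * R^2 * h c := by
  have hcont_h : ContinuousOn h V := hh.1.continuousOn
  set H : ℝ × ℝ → ℝ := fun p => p.1 * h (circleMap c p.1 p.2) with hH
  have hsymm_eq : ∀ p : ℝ × ℝ, Complex.polarCoord.symm p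
      = (p.1 : ℂ) * Complex.exp (p.2 * Complex.I) := by
    intro p
    rw [Complex.polarCoord_symm_apply, Complex.exp_mul_I]
    simp [Complex.ofReal_cos, Complex.ofReal_sin]
  have hmemV : ∀ p : ℝ × ℝ, |p.1| ≤ R → circleMap c p.1 p.2 ∈ closedBall c R := by
    intro p hp
    exact closedBall_subset_closedBall (by simpa using hp)
      (sphere_subset_closedBall (circleMap_mem_sphere' c p.1 p.2))
  -- H is continuous on the closed rectangle, hence integrable on the open one
  have hHcont : ContinuousOn H (Icc (0:ℝ) R ×ˢ Icc (-π) π) := by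
    apply ContinuousOn.mul continuous_fst.continuousOn
    apply (hcont_h.mono hsub).comp
    · apply Continuous.continuousOn
      unfold circleMap
      continuity
    · intro p hp
      exact hmemV p (abs_le.2 ⟨by linarith [hp.1.1, pi_pos.le], hp.1.2⟩)
  have hHint : IntegrableOn H (Ioo (0:ℝ) R ×ˢ Ioo (-π) π) := by
    apply (hHcont.integrableOn_compact (isCompact_Icc.prod isCompact_Icc)).mono_set
    exact prod_mono Ioo_subset_Icc_self Ioo_subset_Icc_self
  set f : ℂ → ℝ := Set.indicator (ball (0:ℂ) R) (fun z => h (c + z)) with hf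
  -- translate
  have step1 : ∫ p, f p = ∫ z in ball c R, h z := by
    have hind : ∀ p : ℂ, f p = Set.indicator (ball c R) h (c + p) := by
      intro p
      rw [hf]
      by_cases hp : p ∈ ball (0:ℂ) R
      · rw [Set.indicator_of_mem hp, Set.indicator_of_mem]
        simpa [mem_ball, dist_eq_norm] using hp
      · rw [Set.indicator_of_notMem hp, Set.indicator_of_notMem]
        simpa [mem_ball, dist_eq_norm] using hp
    simp_rw [hind]
    rw [integral_add_left_eq_self (Set.indicator (ball c R) h) c,
      MeasureTheory.integral_indicator measurableSet_ball]
  have step2 : (∫ p in polarCoord.target, p.1 • f (Complex.polarCoord.symm p)) = ∫ p, f p :=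
    Complex.integral_comp_polarCoord_symm f
  -- restrict the target integral to the rectangle
  have htarget : polarCoord.target = Ioi (0:ℝ) ×ˢ Ioo (-π) π := rfl
  have step3 : (∫ p in polarCoord.target, p.1 • f (Complex.polarCoord.symm p))
      = ∫ p in Ioo (0:ℝ) R ×ˢ Ioo (-π) π, H p := by
    have hint_eq : ∀ p ∈ polarCoord.target, p.1 • f (Complex.polarCoord.symm p)
        = Set.indicator (Ioo (0:ℝ) R ×ˢ Ioo (-π) π) H p := by
      intro p hp
      rw [htarget] at hp
      obtain ⟨hp1, hp2⟩ := hp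
      rw [mem_Ioi] at hp1
      have habs : ‖Complex.polarCoord.symm p‖ = p.1 := by
        rw [Complex.norm_polarCoord_symm, _root_.abs_of_pos hp1]
      by_cases hlt : p.1 < R
      · have hmem : Complex.polarCoord.symm p ∈ ball (0:ℂ) R := by
          rw [mem_ball, dist_zero_right, habs]
          exact hlt
        rw [Set.indicator_of_mem (show p ∈ Ioo (0:ℝ) R ×ˢ Ioo (-π) π from ⟨⟨hp1, hlt⟩, hp2⟩),
          hf, Set.indicator_of_mem hmem]
        simp only [smul_eq_mul, hH]
        congr 2
        rw [hsymm_eq, circleMap]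
      · have hmem : Complex.polarCoord.symm p ∉ ball (0:ℂ) R := by
          rw [mem_ball, dist_zero_right, habs]
          exact hlt
        rw [Set.indicator_of_notMem (fun hmm => hlt hmm.1.2),
          hf, Set.indicator_of_notMem hmem, smul_zero]
    rw [setIntegral_congr_fun polarCoord.open_target.measurableSet hint_eq,
      setIntegral_indicator ((measurableSet_Ioo.prod measurableSet_Ioo))]
    congr 1
    rw [htarget, inter_eq_self_of_subset_right (prod_mono Ioo_subset_Ioi_self subset_rfl)]
  -- Fubini and the circle mean value property
  have step4 : (∫ p in Ioo (0:ℝ) R ×ˢ Ioo (-π) π, H p) = π * R^2 * h c := by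
    rw [MeasureTheory.Measure.volume_eq_prod] at hHint ⊢
    rw [setIntegral_prod H hHint]
    have inner : ∀ x ∈ Ioo (0:ℝ) R,
        (∫ y in Ioo (-π) π, H (x, y)) = x * (2 * π * h c) := by
      intro x hx
      have hper : Function.Periodic (fun θ => h (circleMap c x θ)) (2*π) :=
        fun θ => by simp only []; rw [periodic_circleMap c x θ]
      calc (∫ y in Ioo (-π) π, H (x, y))
          = x * ∫ y in Ioo (-π) π, h (circleMap c x y) := by
            simp only [hH]; rw [MeasureTheory.integral_const_mul]
        _ = x * ∫ y in (-π)..π, h (circleMap c x y) := by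
            rw [intervalIntegral.integral_of_le (by linarith [pi_pos]),
              integral_Ioc_eq_integral_Ioo]
        _ = x * ∫ y in (0:ℝ)..(2*π), h (circleMap c x y) := by
            congr 1
            have h2 : -π + 2*π = π := by ring
            have := hper.intervalIntegral_add_eq (-π) 0
            rw [zero_add, h2] at this
            exact this
        _ = x * (2 * π * h c) := by
            rw [circle_mvp hV hh hsub hx.1.le hx.2]
    rw [setIntegral_congr_fun measurableSet_Ioo inner, MeasureTheory.integral_mul_const,
      integral_Ioc_eq_integral_Ioo.symm,
      ← intervalIntegral.integral_of_le hR.le, integral_id]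
    ring
  rw [← step1, ← step2, step3, step4]

lemma harnack_step {V : Set ℂ} {u : ℂ → ℝ}
    (hcont : ContinuousOn u V) (hpos : ∀ z ∈ V, 0 ≤ u z)
    (hmvp : ∀ (c : ℂ) (R : ℝ), 0 < R → closedBall c R ⊆ V →
      ∫ z in ball c R, u z = π * R^2 * u c)
    {p q : ℂ} {rp rq : ℝ} (hrp : 0 < rp) (hrq : 0 < rq)
    (hsub : closedBall q rq ⊆ V) (hball : ball p rp ⊆ ball q rq) :
    π * rp^2 * u p ≤ π * rq^2 * u q := by
  have hsubp : closedBall p rp ⊆ V := by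
    rw [← closure_ball p hrp.ne']
    exact (closure_mono hball).trans ((closure_ball_subset_closedBall).trans hsub)
  rw [← hmvp p rp hrp hsubp, ← hmvp q rq hrq hsub]
  apply setIntegral_mono_set
  · exact ((hcont.mono hsub).integrableOn_compact (isCompact_closedBall q rq)).mono_set
      ball_subset_closedBall
  · exact (ae_restrict_iff' measurableSet_ball).2 (Filter.Eventually.of_forall
      (fun x hx => hpos x (hsub (ball_subset_closedBall hx))))
  · exact HasSubset.Subset.eventuallyLE hball

lemma real_mem_segment {t : ℝ} (h0 : 0 ≤ t) (h1 : t ≤ 1) :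
    ((t : ℝ) : ℂ) ∈ segment ℝ (0:ℂ) 1 :=
  ⟨1 - t, t, by linarith, h0, by ring, by simp [Complex.real_smul]⟩

lemma harnack_chain {V : Set ℂ} {u : ℂ → ℝ}
    (hcont : ContinuousOn u V) (hpos : ∀ z ∈ V, 0 ≤ u z)
    (hmvp : ∀ (c : ℂ) (R : ℝ), 0 < R → closedBall c R ⊆ V →
      ∫ z in ball c R, u z = π * R^2 * u c)
    {r : ℝ} (hr : 0 < r) (hK : ∀ x ∈ segment ℝ (0:ℂ) 1, closedBall x r ⊆ V)
    {N : ℕ} (hN1 : 1 ≤ N) (hNr : 1/(N:ℝ) ≤ r/2) :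
    u 1 ≤ 4^N * u 0 := by
  have hNpos : (0:ℝ) < N := by exact_mod_cast hN1
  set x : ℕ → ℂ := fun k => ((1 - (k:ℝ)/(N:ℝ) : ℝ) : ℂ) with hx
  have hxmem : ∀ k, k ≤ N → x k ∈ segment ℝ (0:ℂ) 1 := by
    intro k hk
    apply real_mem_segment
    · have : (k:ℝ)/(N:ℝ) ≤ 1 := by
        rw [div_le_one hNpos]; exact_mod_cast hk
      linarith
    · have : (0:ℝ) ≤ (k:ℝ)/(N:ℝ) := by positivity
      linarith
  have hdist : ∀ k : ℕ, dist (x k) (x (k+1)) = 1/(N:ℝ) := by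
    intro k
    rw [hx]
    simp only [Complex.dist_eq, ← Complex.ofReal_sub, Complex.norm_real, Real.norm_eq_abs]
    rw [show (1 - (k:ℝ)/(N:ℝ)) - (1 - ((k+1:ℕ):ℝ)/(N:ℝ)) = 1/(N:ℝ) by
      push_cast; field_simp; ring]
    rw [_root_.abs_of_nonneg (by positivity)]
  have hstep : ∀ k, k < N → u (x k) ≤ 4 * u (x (k+1)) := by
    intro k hk
    have hballs : ball (x k) (r/2) ⊆ ball (x (k+1)) r := by
      intro y hy
      rw [mem_ball] at hy ⊢
      calc dist y (x (k+1)) ≤ dist y (x k) + dist (x k) (x (k+1)) := dist_triangle _ _ _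
        _ < r/2 + 1/(N:ℝ) := by have := hdist k; linarith
        _ ≤ r := by linarith
    have := harnack_step hcont hpos hmvp (by linarith : (0:ℝ) < r/2) hr
      (hK _ (hxmem (k+1) hk)) hballs
    have hπ : (0:ℝ) < π * r^2 := by positivity
    nlinarith [this]
  have hchain : ∀ k, k ≤ N → u (x 0) ≤ 4^k * u (x k) := by
    intro k
    induction k with
    | zero => intro _; simp
    | succ k ih =>
      intro hk
      have h1 := ih (by omega)
      have h2 := hstep k (by omega)
      calc u (x 0) ≤ 4^k * u (x k) := h1
        _ ≤ 4^k * (4 * u (x (k+1))) := by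
            apply mul_le_mul_of_nonneg_left h2 (by positivity)
        _ = 4^(k+1) * u (x (k+1)) := by ring
  have hx0 : x 0 = 1 := by simp [hx]
  have hxN : x N = 0 := by
    rw [hx]
    simp only []
    rw [div_self hNpos.ne']
    simp
  have := hchain N le_rfl
  rwa [hx0, hxN] at this

/-- If `h` is harmonic on a connected open set `V ⊆ ℂ` containing the segment `[0,1]`,
bounded by `1` in absolute value on `V`, and `h(1) = 0`, then there is a constant
`0 ≤ a < 1`, depending only on `V`, with `|h(0)| ≤ a`. -/
theorem harnack_value_at_zero (V : Set ℂ) (hV : IsOpen V) (hVc : IsConnected V)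
    (hseg : segment ℝ (0 : ℂ) 1 ⊆ V) :
    ∃ a : ℝ, 0 ≤ a ∧ a < 1 ∧ ∀ h : ℂ → ℝ, HarmonicOnSet h V →
      (∀ z ∈ V, |h z| ≤ 1) → h 1 = 0 → |h 0| ≤ a := by
  have hKcomp : IsCompact (segment ℝ (0:ℂ) 1) := by
    rw [segment_eq_image]
    exact isCompact_Icc.image (by continuity)
  obtain ⟨δ, hδpos, hδsub⟩ := hKcomp.exists_cthickening_subset_open hV hseg
  have hK : ∀ x ∈ segment ℝ (0:ℂ) 1, closedBall x δ ⊆ V := fun x hx =>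
    (closedBall_subset_cthickening hx δ).trans hδsub
  set N : ℕ := max 1 ⌈2/δ⌉₊ with hN
  have hN1 : 1 ≤ N := le_max_left _ _
  have hNpos : (0:ℝ) < N := by exact_mod_cast hN1
  have hNr : 1/(N:ℝ) ≤ δ/2 := by
    have h2δ : (2/δ : ℝ) ≤ N := le_trans (Nat.le_ceil _)
      (by exact_mod_cast le_max_right 1 ⌈2/δ⌉₊)
    have h2 : 2 ≤ (N:ℝ) * δ := by
      rw [div_le_iff₀ hδpos] at h2δ
      linarith
    rw [div_le_div_iff₀ hNpos two_pos]
    linarith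
  have hq : (0:ℝ) < (1/4:ℝ)^N := by positivity
  have hq1 : (1/4:ℝ)^N ≤ 1 := by
    calc (1/4:ℝ)^N ≤ 1^N := by
          apply pow_le_pow_left₀ (by norm_num) (by norm_num)
      _ = 1 := one_pow N
  refine ⟨1 - (1/4:ℝ)^N, by linarith, by linarith, ?_⟩
  intro h hh hbound h1
  have hcont_h : ContinuousOn h V := hh.1.continuousOn
  have hvol : ∀ (c:ℂ) (R:ℝ), 0 ≤ R → (∫ _z in ball c R, (1:ℝ)) = π * R^2 := by
    intro c R hR
    rw [setIntegral_const, measureReal_def, Complex.volume_ball]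
    rw [ENNReal.toReal_mul, ENNReal.toReal_pow, ENNReal.toReal_ofReal hR]
    simp [NNReal.coe_real_pi]
    ring
  have hmvp : ∀ s : ℝ, ∀ (c : ℂ) (R:ℝ), 0 < R → closedBall c R ⊆ V →
      (∫ z in ball c R, (1 - s * h z)) = π * R^2 * (1 - s * h c) := by
    intro s c R hR hsub
    have hint : IntegrableOn h (ball c R) :=
      ((hcont_h.mono hsub).integrableOn_compact (isCompact_closedBall c R)).mono_set
        ball_subset_closedBall
    rw [MeasureTheory.integral_sub (integrableOn_const (C := (1:ℝ)) measure_ball_lt_top.ne) (hint.const_mul s),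
      MeasureTheory.integral_const_mul, ball_mvp hV hh hR hsub, hvol c R hR.le]
    ring
  have happly : ∀ s : ℝ, s = 1 ∨ s = -1 → 1 ≤ 4^N * (1 - s * h 0) := by
    intro s hs
    have hcont_u : ContinuousOn (fun z => 1 - s * h z) V :=
      continuousOn_const.sub (continuousOn_const.mul hcont_h)
    have hpos_u : ∀ z ∈ V, 0 ≤ 1 - s * h z := by
      intro z hz
      have := abs_le.1 (hbound z hz)
      rcases hs with rfl | rfl <;> simp <;> linarith [this.1, this.2]
    have := harnack_chain hcont_u hpos_u (hmvp s) hδpos hK hN1 hNr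
    rw [h1] at this
    simpa using this
  have hp1 := happly 1 (Or.inl rfl)
  have hp2 := happly (-1) (Or.inr rfl)
  have h4 : (0:ℝ) < (4:ℝ)^N := by positivity
  have heq : (1/4:ℝ)^N = 1/(4:ℝ)^N := by rw [div_pow, one_pow]
  rw [abs_le]
  constructor
  · have : 1/(4:ℝ)^N ≤ 1 - (-1) * h 0 := (div_le_iff₀ h4).2 (by linarith)
    rw [← heq] at this
    linarith
  · have : 1/(4:ℝ)^N ≤ 1 - 1 * h 0 := (div_le_iff₀ h4).2 (by linarith)
    rw [← heq] at this
    linarith
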